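/- Let G = (V_1, V_2, E) be a connected bipartite graph with at least one edge, and suppose G has a gap-free ordering of V = V_1 ∪ V_2 of the form v_1,…,v_k, v_{k+1},…,v_n with V_1 = {v_1,…,v_k} and V_2 = {v_{k+1},…,v_n}. Then v_1,…,v_k is a contiguous ordering of V_1 to the family 𝒮_1 = { N_G(v) : v ∈ V_2 }. -/
import Mathlib


/-- Gap condition (g1) for the index pair `(i,j)` under ordering `σ`. -/
def GapG1 {V : Type*} {n : ℕ} (G : SimpleGraph V) (σ : Fin n ≃ V) (i j : Fin n) : Prop :=
  (∃ j' j'' : Fin n, j' < j ∧ j < j'' ∧ G.Adj (σ i) (σ j') ∧ G.Adj (σ i) (σ j'')) ∨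
  (∃ i' i'' : Fin n, i' < i ∧ i < i'' ∧ G.Adj (σ i') (σ j) ∧ G.Adj (σ i'') (σ j))

/-- Gap condition (g2). -/
def GapG2 {V : Type*} {n : ℕ} (G : SimpleGraph V) (σ : Fin n ≃ V) (i j : Fin n) : Prop :=
  ∃ i' j' : Fin n, j' < i ∧ j < i' ∧ G.Adj (σ i) (σ i') ∧ G.Adj (σ j') (σ j)

/-- Gap condition (g3). -/
def GapG3 {V : Type*} {n : ℕ} (G : SimpleGraph V) (σ : Fin n ≃ V) (i j : Fin n) : Prop :=
  ∃ i' j' : Fin n, i' < j ∧ i < j' ∧ G.Adj (σ i) (σ i') ∧ G.Adj (σ j) (σ j')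

/-- `σ` is a gap-free ordering of the vertices of `G`: no non-adjacent pair
satisfies any of (g1), (g2), (g3). -/
def GapFree {V : Type*} {n : ℕ} (G : SimpleGraph V) (σ : Fin n ≃ V) : Prop :=
  ∀ i j : Fin n, i < j → ¬ G.Adj (σ i) (σ j) →
    ¬ (GapG1 G σ i j ∨ GapG2 G σ i j ∨ GapG3 G σ i j)

/-- For a connected bipartite graph with parts `V₁ = {v₁,…,v_k}` and
`V₂ = {v_{k+1},…,v_n}` and a gap-free ordering of this form, the restriction
`v₁,…,v_k` is a contiguous ordering of `V₁` to `𝒮₁ = {N_G(v) : v ∈ V₂}`: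
every neighborhood `N_G(v)`, `v ∈ V₂`, occupies consecutive positions among
`v₁,…,v_k`, and nested neighborhoods share a first or last element. -/

lemma exists_neighbor' {V : Type*} (G : SimpleGraph V) (hconn : G.Connected)
    (hE : ∃ u v : V, G.Adj u v) (w : V) : ∃ x, G.Adj w x := by
  obtain ⟨u, v, huv⟩ := hE
  by_cases h : w = u
  · exact ⟨v, h ▸ huv⟩
  · obtain ⟨p⟩ := hconn.preconnected w u
    cases p with
    | nil => exact absurd rfl h
    | cons h' _ => exact ⟨_, h'⟩

theorem bipartite_gapFree_gives_contiguous
    {V : Type*} {n : ℕ} (G : SimpleGraph V) (σ : Fin n ≃ V) (k : ℕ) (hk : k ≤ n)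
    (hbip : ∀ i j : Fin n, G.Adj (σ i) (σ j) → ((i : ℕ) < k ↔ ¬ (j : ℕ) < k))
    (hconn : G.Connected) (hE : ∃ u v : V, G.Adj u v)
    (hgf : GapFree G σ) :
    (∀ j : Fin n, k ≤ (j : ℕ) →
      ∀ p q r : Fin n, p ≤ q → q ≤ r → (r : ℕ) < k →
        G.Adj (σ j) (σ p) → G.Adj (σ j) (σ r) → G.Adj (σ j) (σ q)) ∧
    (∀ ju jv : Fin n, k ≤ (ju : ℕ) → k ≤ (jv : ℕ) →
      (∀ x : V, G.Adj (σ ju) x → G.Adj (σ jv) x) →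
      ∀ p r : Fin n, G.Adj (σ jv) (σ p) → G.Adj (σ jv) (σ r) →
        (∀ q : Fin n, G.Adj (σ jv) (σ q) → p ≤ q ∧ q ≤ r) →
        (G.Adj (σ ju) (σ p) ∨ G.Adj (σ ju) (σ r))) := by
  constructor
  · intro j hj p q r hpq hqr hrk hap har
    rcases eq_or_lt_of_le hpq with h1 | h1
    · exact h1 ▸ hap
    rcases eq_or_lt_of_le hqr with h2 | h2
    · exact h2.symm ▸ har
    by_contra hnadj
    have hqj : q < j := Fin.lt_def.mpr
      (lt_of_lt_of_le (lt_of_le_of_lt (Fin.le_def.mp hqr) hrk) hj)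
    exact hgf q j hqj (fun h => hnadj h.symm)
      (Or.inl (Or.inr ⟨p, r, h1, h2, hap.symm, har.symm⟩))
  · intro ju jv hju hjv hsub p r hvp hvr hpr
    by_contra hn
    push_neg at hn
    obtain ⟨hnp, hnr⟩ := hn
    obtain ⟨x, hx⟩ := exists_neighbor' G hconn hE (σ ju)
    have hjum : G.Adj (σ ju) (σ (σ.symm x)) := by
      rwa [σ.apply_symm_apply]
    set m := σ.symm x
    have hjvm : G.Adj (σ jv) (σ m) := hsub _ hjum
    obtain ⟨hpm, hmr⟩ := hpr m hjvm
    have hpm' : p < m := lt_of_le_of_ne hpm (by rintro rfl; exact hnp hjum)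
    have hmr' : m < r := lt_of_le_of_ne hmr (by rintro rfl; exact hnr hjum)
    have hjv' : ¬ (jv : ℕ) < k := not_lt.mpr hjv
    have hrk : (r : ℕ) < k := by
      by_contra h; exact hjv' ((hbip jv r hvr).mpr h)
    have hpk : (p : ℕ) < k := by
      by_contra h; exact hjv' ((hbip jv p hvp).mpr h)
    rcases lt_trichotomy ju jv with hc | hc | hc
    · have hru : r < ju := Fin.lt_def.mpr (lt_of_lt_of_le hrk hju)
      exact hgf r ju hru (fun h => hnr h.symm)
        (Or.inr (Or.inl ⟨jv, m, hmr', hc, hvr.symm, hjum.symm⟩))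
    · exact hnp (hc ▸ hvp)
    · have hpu : p < ju := Fin.lt_def.mpr (lt_of_lt_of_le hpk hju)
      exact hgf p ju hpu (fun h => hnp h.symm)
        (Or.inr (Or.inr ⟨jv, m, hc, hpm', hvp.symm, hjum⟩))
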